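/- Let d ≥ 1, 1 ≤ k ≤ d, let Γ₁ ∈ ℝ^{k×k} be diagonal with strictly positive diagonal entries, and let Γ = [[Γ₁, 0],[0, 0]] ∈ ℝ^{d×d}. Let f₁, g₁ ∈ L¹(ℝ^d) ∩ L²(ℝ^d). Define g₂(ω) = ∫_{ℝ^d} g₁(y) e^{−2πi y·ω} dy and, for t ∈ ℝ^k and ω₂ ∈ ℝ^{d−k}, f₂(t, ω₂) = ∫_{ℝ^{d−k}} f₁(Γ₁⁻¹ t, x₂) e^{−2πi ω₂·x₂} dx₂ (defined for almost every t). Then for every ω₁, ξ₁ ∈ ℝ^k and ω₂, ξ₂ ∈ ℝ^{d−k}: ∫_{ℝ^d}∫_{ℝ^d} e^{2πi (Γx)·y} f₁(x) conj(g₁(y)) e^{−2πi((Γ₁ω₁)·x₁ + ω₂·x₂ + ξ₁·y₁ + ξ₂·y₂)} dx dy = |det Γ₁|⁻¹ ∫_{ℝ^k} f₂(t, ω₂) conj(g₂(t − ξ₁, −ξ₂)) e^{−2πi ω₁·t} dt, where x = (x₁, x₂), y = (y₁, y₂) ∈ ℝ^k × ℝ^{d−k}. -/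

import Mathlib

open MeasureTheory
open scoped ComplexConjugate

noncomputable def cE (r : ℝ) : ℂ := Complex.exp (-2 * (Real.pi : ℂ) * Complex.I * (r : ℂ))

lemma cE_eq (r : ℝ) : Complex.exp (-2 * (Real.pi : ℂ) * Complex.I * (r : ℂ)) = cE r := rfl

lemma cE_add (a b : ℝ) : cE (a + b) = cE a * cE b := by
  rw [cE, cE, cE, ← Complex.exp_add]; push_cast; ring_nf

lemma cE_norm (a : ℝ) : ‖cE a‖ = 1 := by
  have : (-2 * (Real.pi : ℂ) * Complex.I * (a : ℂ)) = ((-2 * Real.pi * a : ℝ) : ℂ) * Complex.I := by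
    push_cast; ring
  rw [cE, this, Complex.norm_exp_ofReal_mul_I]

lemma cE_conj (a : ℝ) : conj (cE a) = cE (-a) := by
  rw [cE, cE, ← Complex.exp_conj]
  congr 1
  simp only [map_mul, map_neg, map_ofNat, Complex.conj_ofReal, Complex.conj_I]
  push_cast
  ring

lemma cE_continuous : Continuous cE := by
  unfold cE; fun_prop

lemma cE_pos (a : ℝ) : Complex.exp (2 * (Real.pi : ℂ) * Complex.I * (a : ℂ)) = cE (-a) := by
  rw [cE]; congr 1; push_cast; ring

/-- **key integral identity.** `ℝ^d = ℝ^k × ℝ^{d−k}` is modelled as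
`(Fin k → ℝ) × (Fin m → ℝ)`; `Γ₁ = diag(γ)` with `γ_j > 0` and `Γ = [[Γ₁,0],[0,0]]`.
For `f₁, g₁ ∈ L¹ ∩ L²`, the chirped double Fourier integral of `f₁ ⊗ conj g₁` equals
`|det Γ₁|⁻¹` times the partial short-time Fourier transform `V^k_{g₂} f₂ (ξ₁, ω₂, ω₁, ξ₂)`. -/
theorem chirp_integral_eq_partial_stft (k m : ℕ) (hk : 1 ≤ k)
    (γ : Fin k → ℝ) (hγ : ∀ j, 0 < γ j)
    (f₁ g₁ : (Fin k → ℝ) × (Fin m → ℝ) → ℂ)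
    (hf₁i : Integrable f₁ volume) (hf₁2 : MemLp f₁ 2 volume)
    (hg₁i : Integrable g₁ volume) (hg₁2 : MemLp g₁ 2 volume)
    (g₂ : (Fin k → ℝ) × (Fin m → ℝ) → ℂ)
    (hg₂ : g₂ = fun ω => ∫ y : (Fin k → ℝ) × (Fin m → ℝ), g₁ y *
      Complex.exp (-2 * (Real.pi : ℂ) * Complex.I *
        (((∑ j, y.1 j * ω.1 j) + ∑ j, y.2 j * ω.2 j : ℝ) : ℂ)))
    (f₂ : (Fin k → ℝ) × (Fin m → ℝ) → ℂ)
    (hf₂ : f₂ = fun t => ∫ x₂ : Fin m → ℝ, f₁ ((fun j => (γ j)⁻¹ * t.1 j), x₂) *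
      Complex.exp (-2 * (Real.pi : ℂ) * Complex.I * ((∑ j, t.2 j * x₂ j : ℝ) : ℂ)))
    (ω₁ ξ₁ : Fin k → ℝ) (ω₂ ξ₂ : Fin m → ℝ) :
    (∫ x : (Fin k → ℝ) × (Fin m → ℝ), ∫ y : (Fin k → ℝ) × (Fin m → ℝ),
        Complex.exp (2 * (Real.pi : ℂ) * Complex.I * ((∑ j, γ j * x.1 j * y.1 j : ℝ) : ℂ)) *
          f₁ x * conj (g₁ y) *
          Complex.exp (-2 * (Real.pi : ℂ) * Complex.I *
            (((∑ j, γ j * ω₁ j * x.1 j) + (∑ j, ω₂ j * x.2 j) +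
              (∑ j, ξ₁ j * y.1 j) + ∑ j, ξ₂ j * y.2 j : ℝ) : ℂ))) =
      (((∏ j, γ j : ℝ) : ℂ))⁻¹ *
        ∫ t : Fin k → ℝ, f₂ (t, ω₂) * conj (g₂ (t - ξ₁, -ξ₂)) *
          Complex.exp (-2 * (Real.pi : ℂ) * Complex.I * ((∑ j, ω₁ j * t j : ℝ) : ℂ)) := by
  classical
  simp only [cE_eq, cE_pos]
  simp only [cE_eq] at hg₂ hf₂
  -- the bound for `g₂`
  set C : ℝ := ∫ y : (Fin k → ℝ) × (Fin m → ℝ), ‖g₁ y‖ with hC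
  have hg₂cont : Continuous g₂ := by
    rw [hg₂]
    refine continuous_of_dominated (bound := fun y => ‖g₁ y‖) ?_ ?_ hg₁i.norm ?_
    · intro ω
      exact hg₁i.aestronglyMeasurable.mul
        (Continuous.aestronglyMeasurable (cE_continuous.comp (by fun_prop)))
    · intro ω
      filter_upwards with y
      rw [norm_mul, cE_norm, mul_one]
    · filter_upwards with y
      exact continuous_const.mul (cE_continuous.comp (by fun_prop))
  have hg₂bd : ∀ ω, ‖g₂ ω‖ ≤ C := by
    intro ω
    rw [hg₂]
    refine (norm_integral_le_integral_norm _).trans (le_of_eq ?_)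
    simp only [norm_mul, cE_norm, mul_one, hC]
  -- Step A: compute the inner integral in `y`
  have key_y : ∀ x : (Fin k → ℝ) × (Fin m → ℝ),
      (∫ y : (Fin k → ℝ) × (Fin m → ℝ),
        cE (-∑ j, γ j * x.1 j * y.1 j) * f₁ x * conj (g₁ y) *
          cE (∑ j, γ j * ω₁ j * x.1 j + ∑ j, ω₂ j * x.2 j + ∑ j, ξ₁ j * y.1 j +
            ∑ j, ξ₂ j * y.2 j)) =
      f₁ x * cE (∑ j, γ j * ω₁ j * x.1 j + ∑ j, ω₂ j * x.2 j) *
        conj (g₂ ((fun j => γ j * x.1 j) - ξ₁, -ξ₂)) := by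
    intro x
    have hpt : ∀ y : (Fin k → ℝ) × (Fin m → ℝ),
        cE (-∑ j, γ j * x.1 j * y.1 j) * f₁ x * conj (g₁ y) *
          cE (∑ j, γ j * ω₁ j * x.1 j + ∑ j, ω₂ j * x.2 j + ∑ j, ξ₁ j * y.1 j +
            ∑ j, ξ₂ j * y.2 j) =
        (f₁ x * cE (∑ j, γ j * ω₁ j * x.1 j + ∑ j, ω₂ j * x.2 j)) *
          conj (g₁ y * cE (∑ j, y.1 j * ((fun j => γ j * x.1 j) - ξ₁) j +
            ∑ j, y.2 j * (-ξ₂ : Fin m → ℝ) j)) := by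
      intro y
      have hB : (∑ j, y.1 j * ((fun j => γ j * x.1 j) - ξ₁) j +
          ∑ j, y.2 j * (-ξ₂ : Fin m → ℝ) j) =
          (∑ j, γ j * x.1 j * y.1 j) - (∑ j, ξ₁ j * y.1 j) - ∑ j, ξ₂ j * y.2 j := by
        simp only [Pi.sub_apply, Pi.neg_apply, mul_sub, mul_neg, Finset.sum_sub_distrib,
          Finset.sum_neg_distrib]
        have h1 : ∑ j, y.1 j * (γ j * x.1 j) = ∑ j, γ j * x.1 j * y.1 j :=
          Finset.sum_congr rfl fun j _ => by ring
        have h2 : ∑ j, y.1 j * ξ₁ j = ∑ j, ξ₁ j * y.1 j :=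
          Finset.sum_congr rfl fun j _ => by ring
        have h3 : ∑ j, y.2 j * ξ₂ j = ∑ j, ξ₂ j * y.2 j :=
          Finset.sum_congr rfl fun j _ => by ring
        rw [h1, h2, h3]
        ring
      rw [map_mul, cE_conj, hB]
      have hexp : cE (-∑ j, γ j * x.1 j * y.1 j) *
          cE (∑ j, γ j * ω₁ j * x.1 j + ∑ j, ω₂ j * x.2 j + ∑ j, ξ₁ j * y.1 j +
            ∑ j, ξ₂ j * y.2 j) =
          cE (∑ j, γ j * ω₁ j * x.1 j + ∑ j, ω₂ j * x.2 j) *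
          cE (-((∑ j, γ j * x.1 j * y.1 j) - (∑ j, ξ₁ j * y.1 j) - ∑ j, ξ₂ j * y.2 j)) := by
        rw [← cE_add, ← cE_add]
        congr 1
        ring
      calc cE (-∑ j, γ j * x.1 j * y.1 j) * f₁ x * conj (g₁ y) *
            cE (∑ j, γ j * ω₁ j * x.1 j + ∑ j, ω₂ j * x.2 j + ∑ j, ξ₁ j * y.1 j +
              ∑ j, ξ₂ j * y.2 j)
          = (cE (-∑ j, γ j * x.1 j * y.1 j) *
              cE (∑ j, γ j * ω₁ j * x.1 j + ∑ j, ω₂ j * x.2 j + ∑ j, ξ₁ j * y.1 j +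
                ∑ j, ξ₂ j * y.2 j)) * (f₁ x * conj (g₁ y)) := by ring
        _ = (cE (∑ j, γ j * ω₁ j * x.1 j + ∑ j, ω₂ j * x.2 j) *
              cE (-((∑ j, γ j * x.1 j * y.1 j) - (∑ j, ξ₁ j * y.1 j) - ∑ j, ξ₂ j * y.2 j))) *
              (f₁ x * conj (g₁ y)) := by rw [hexp]
        _ = _ := by ring
    simp_rw [hpt]
    simp only [hg₂]
    rw [integral_const_mul, integral_conj]
  simp_rw [key_y]
  -- Integrability of the remaining integrand in `x`
  have hσcont : Continuous fun u : Fin k → ℝ =>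
      (((fun j => γ j * u j) - ξ₁ : Fin k → ℝ), (-ξ₂ : Fin m → ℝ)) := by fun_prop
  have hHmeas : AEStronglyMeasurable (fun x : (Fin k → ℝ) × (Fin m → ℝ) =>
      f₁ x * cE (∑ j, γ j * ω₁ j * x.1 j + ∑ j, ω₂ j * x.2 j) *
        conj (g₂ ((fun j => γ j * x.1 j) - ξ₁, -ξ₂))) volume := by
    refine (hf₁i.aestronglyMeasurable.mul (Continuous.aestronglyMeasurable ?_)).mul
      (Continuous.aestronglyMeasurable ?_)
    · exact cE_continuous.comp (by fun_prop)
    · exact Complex.continuous_conj.comp (hg₂cont.comp (hσcont.comp continuous_fst))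
  have hHint : Integrable (fun x : (Fin k → ℝ) × (Fin m → ℝ) =>
      f₁ x * cE (∑ j, γ j * ω₁ j * x.1 j + ∑ j, ω₂ j * x.2 j) *
        conj (g₂ ((fun j => γ j * x.1 j) - ξ₁, -ξ₂))) volume := by
    refine Integrable.mono' (hf₁i.norm.mul_const C) hHmeas ?_
    filter_upwards with x
    rw [norm_mul, norm_mul, cE_norm, mul_one, RCLike.norm_conj]
    exact mul_le_mul_of_nonneg_left (hg₂bd _) (norm_nonneg _)
  rw [Measure.volume_eq_prod] at hHint ⊢
  rw [integral_prod _ hHint]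
  -- the diagonal linear maps
  set M : (Fin k → ℝ) →ₗ[ℝ] (Fin k → ℝ) := Matrix.toLin' (Matrix.diagonal γ) with hM
  set L : (Fin k → ℝ) →ₗ[ℝ] (Fin k → ℝ) :=
    Matrix.toLin' (Matrix.diagonal fun j => (γ j)⁻¹) with hL
  have hMapp : ∀ u : Fin k → ℝ, M u = fun j => γ j * u j := by
    intro u; funext i
    simp [hM, Matrix.toLin'_apply, Matrix.mulVec_diagonal]
  have hLapp : ∀ u : Fin k → ℝ, L u = fun j => (γ j)⁻¹ * u j := by
    intro u; funext i
    simp [hL, Matrix.toLin'_apply, Matrix.mulVec_diagonal]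
  have hprodpos : 0 < ∏ j, γ j := Finset.prod_pos fun j _ => hγ j
  have hdet : LinearMap.det M = ∏ j, γ j := by
    rw [hM, LinearMap.det_toLin', Matrix.det_diagonal]
  have hdetL : LinearMap.det L ≠ 0 := by
    rw [hL, LinearMap.det_toLin', Matrix.det_diagonal]
    exact (Finset.prod_pos fun j _ => inv_pos.2 (hγ j)).ne'
  have hMmeas : Measurable M := M.continuous_of_finiteDimensional.measurable
  have hmapM : Measure.map M volume = ENNReal.ofReal ((∏ j, γ j)⁻¹) • volume := by
    rw [Real.map_linearMap_volume_pi_eq_smul_volume_pi (by rw [hdet]; exact hprodpos.ne')]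
    rw [hdet, abs_of_pos (inv_pos.2 hprodpos)]
  have hML : ∀ t : Fin k → ℝ, M (L t) = t := by
    intro t
    rw [hLapp, hMapp]
    funext j
    exact mul_inv_cancel_left₀ (hγ j).ne' (t j)
  have hLq : Measure.QuasiMeasurePreserving L volume volume :=
    ⟨L.continuous_of_finiteDimensional.measurable, by
      rw [Real.map_linearMap_volume_pi_eq_smul_volume_pi hdetL]
      exact Measure.smul_absolutelyContinuous⟩
  -- compute the inner x₂ integral
  have key_x2 : ∀ u : Fin k → ℝ,
      (∫ y : Fin m → ℝ, f₁ (u, y) * cE (∑ j, γ j * ω₁ j * u j + ∑ j, ω₂ j * y j) *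
        conj (g₂ ((fun j => γ j * u j) - ξ₁, -ξ₂))) =
      f₂ (M u, ω₂) * conj (g₂ (M u - ξ₁, -ξ₂)) * cE (∑ j, ω₁ j * M u j) := by
    intro u
    rw [hMapp u]
    simp only [hf₂]
    have hu : (fun j => (γ j)⁻¹ * ((fun j => γ j * u j) : Fin k → ℝ) j) = u := by
      funext j
      exact inv_mul_cancel_left₀ (hγ j).ne' (u j)
    rw [hu]
    have hsum : (∑ j, ω₁ j * ((fun j => γ j * u j) : Fin k → ℝ) j) =
        ∑ j, γ j * ω₁ j * u j :=
      Finset.sum_congr rfl fun j _ => by ring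
    rw [hsum]
    have hpt2 : ∀ y : Fin m → ℝ,
        f₁ (u, y) * cE (∑ j, γ j * ω₁ j * u j + ∑ j, ω₂ j * y j) *
          conj (g₂ ((fun j => γ j * u j) - ξ₁, -ξ₂)) =
        (f₁ (u, y) * cE (∑ j, ω₂ j * y j)) *
          (cE (∑ j, γ j * ω₁ j * u j) * conj (g₂ ((fun j => γ j * u j) - ξ₁, -ξ₂))) := by
      intro y
      rw [cE_add]
      ring
    simp_rw [hpt2]
    rw [integral_mul_const]
    ring
  simp_rw [key_x2]
  -- measurability of the new integrand
  have hΦmeas : AEStronglyMeasurable (fun u : Fin k → ℝ =>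
      f₂ (M u, ω₂) * conj (g₂ (M u - ξ₁, -ξ₂)) * cE (∑ j, ω₁ j * M u j)) volume := by
    have h1 : AEStronglyMeasurable (fun u : Fin k → ℝ =>
        ∫ y : Fin m → ℝ, f₁ (u, y) * cE (∑ j, γ j * ω₁ j * u j + ∑ j, ω₂ j * y j) *
          conj (g₂ ((fun j => γ j * u j) - ξ₁, -ξ₂))) volume :=
      hHint.aestronglyMeasurable.integral_prod_right'
    exact funext key_x2 ▸ h1
  have hψmeas0 : AEStronglyMeasurable (fun t : Fin k → ℝ =>
      f₂ (t, ω₂) * conj (g₂ (t - ξ₁, -ξ₂)) * cE (∑ j, ω₁ j * t j)) volume := by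
    have h2 : AEStronglyMeasurable (fun t : Fin k → ℝ =>
        f₂ (M (L t), ω₂) * conj (g₂ (M (L t) - ξ₁, -ξ₂)) * cE (∑ j, ω₁ j * M (L t) j))
        volume := hΦmeas.comp_quasiMeasurePreserving hLq
    simp_rw [hML] at h2
    exact h2
  have hψmeas : AEStronglyMeasurable (fun t : Fin k → ℝ =>
      f₂ (t, ω₂) * conj (g₂ (t - ξ₁, -ξ₂)) * cE (∑ j, ω₁ j * t j)) (Measure.map M volume) := by
    rw [hmapM]
    exact hψmeas0.mono_ac Measure.smul_absolutelyContinuous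
  calc ∫ u, f₂ (M u, ω₂) * conj (g₂ (M u - ξ₁, -ξ₂)) * cE (∑ j, ω₁ j * M u j)
      = ∫ t, f₂ (t, ω₂) * conj (g₂ (t - ξ₁, -ξ₂)) * cE (∑ j, ω₁ j * t j)
          ∂(Measure.map M volume) := (integral_map hMmeas.aemeasurable hψmeas).symm
    _ = ((∏ j, γ j)⁻¹ : ℝ) •
          ∫ t, f₂ (t, ω₂) * conj (g₂ (t - ξ₁, -ξ₂)) * cE (∑ j, ω₁ j * t j) := by
        rw [hmapM, integral_smul_measure, ENNReal.toReal_ofReal (inv_pos.2 hprodpos).le]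
    _ = (((∏ j, γ j : ℝ) : ℂ))⁻¹ *
          ∫ t, f₂ (t, ω₂) * conj (g₂ (t - ξ₁, -ξ₂)) * cE (∑ j, ω₁ j * t j) := by
        rw [Complex.real_smul, Complex.ofReal_inv]
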